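/- If E ⊆ 𝔽_q^3 and for every y ∈ 𝔽_q^3 \ {0} the hypothesis h_y : E → {0,1} is defined by h_y(x) = 1 iff x·y = t (t ≠ 0), then no subset of E of size 4 is shattered by the hypothesis class {h_y : y ∈ E}. In particular, the VC dimension of this class is at most 3. -/

import Mathlib

open Finset

def dot3 {F : Type*} [Field F] (x y : Fin 3 → F) : F := ∑ i, x i * y i

theorem no_four_point_set_shattered {F : Type*} [Field F] [Fintype F] [DecidableEq F]
    (E : Finset (Fin 3 → F)) (t : F) (ht : t ≠ 0)
    (C : Finset (Fin 3 → F)) (hCE : C ⊆ E) (hC : C.card = 4) :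
    ¬ (∀ f : (Fin 3 → F) → Bool, ∃ y ∈ E, ∀ x ∈ C, (f x = true ↔ dot3 x y = t)) := by
  intro H
  -- case 0 ∈ C
  by_cases h0 : (0 : Fin 3 → F) ∈ C
  · obtain ⟨y, -, hy⟩ := H (fun _ => true)
    have := (hy 0 h0).mp rfl
    simp [dot3] at this
    exact ht this.symm
  -- lift
  set φ : (Fin 3 → F) → (Fin 4 → F) := fun x => Fin.snoc x 1 with hφ
  have φinj : Function.Injective φ := by
    intro x y hxy
    funext i
    have := congrFun hxy (Fin.castSucc i)
    simpa [hφ, Fin.snoc_castSucc] using this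
  set e4 : Fin 4 → F := Pi.single 3 1 with he4
  have he4notmem : e4 ∉ C.image φ := by
    simp only [mem_image, not_exists]
    rintro x ⟨hx, hxe⟩
    apply h0
    have : x = 0 := by
      funext i
      have := congrFun hxe (Fin.castSucc i)
      have hne : (Fin.castSucc i : Fin 4) ≠ 3 := by
        fin_cases i <;> decide
      simpa [hφ, he4, Fin.snoc_castSucc, Pi.single_apply, hne] using this
    rwa [this] at hx
  have hcard : Module.finrank F (Fin 4 → F) < (insert e4 (C.image φ)).card := by
    rw [card_insert_of_notMem he4notmem, card_image_of_injective _ φinj, hC,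
      Module.finrank_fin_fun]
    norm_num
  obtain ⟨g, hgsum, v, hvmem, hgv⟩ :=
    Module.exists_nontrivial_relation_of_finrank_lt_card (R := F) hcard
  rw [sum_insert he4notmem, sum_image (fun a _ b _ h => φinj h)] at hgsum
  set c : (Fin 3 → F) → F := fun x => g (φ x) with hc
  -- coordinate equations
  have hcoord : ∀ i : Fin 3, ∑ x ∈ C, c x * x i = 0 := by
    intro i
    have := congrFun hgsum (Fin.castSucc i)
    have hne : (Fin.castSucc i : Fin 4) ≠ 3 := by fin_cases i <;> decide
    simpa [hφ, he4, hc, Fin.snoc_castSucc, Pi.single_apply, hne] using this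
  have hlast : g e4 + ∑ x ∈ C, c x = 0 := by
    have := congrFun hgsum (3 : Fin 4)
    have h3 : (3 : Fin 4) = Fin.last 3 := by decide
    have h3' : ∀ x : Fin 3 → F, (Fin.snoc (α := fun _ => F) x (1 : F) (3 : Fin 4) : F) = 1 :=
      fun x => Fin.snoc_last (α := fun _ => F) (p := x) (x := (1 : F))
    simpa [hφ, he4, hc, h3, h3', Fin.snoc_last, Pi.single_apply] using this
  -- key computation: for any y, ∑_{x∈C} c x * dot3 x y = 0
  have hdot : ∀ y : Fin 3 → F, ∑ x ∈ C, c x * dot3 x y = 0 := by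
    intro y
    simp only [dot3, Finset.mul_sum]
    rw [Finset.sum_comm]
    refine Finset.sum_eq_zero fun i _ => ?_
    have h1 : ∑ x ∈ C, c x * (x i * y i) = (∑ x ∈ C, c x * x i) * y i := by
      rw [Finset.sum_mul]; exact Finset.sum_congr rfl fun x _ => by ring
    rw [h1, hcoord i, zero_mul]
  by_cases hge : g e4 = 0
  · -- some c x₀ ≠ 0
    have hsumc : ∑ x ∈ C, c x = 0 := by rwa [hge, zero_add] at hlast
    have hx0 : ∃ x₀ ∈ C, c x₀ ≠ 0 := by
      rcases mem_insert.mp hvmem with h | h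
      · exact absurd (h ▸ hgv) (by rw [hge]; simp)
      · obtain ⟨x₀, hx0C2, rfl⟩ := mem_image.mp h
        exact ⟨x₀, hx0C2, hgv⟩
    obtain ⟨x₀, hx0C, hc0⟩ := hx0
    obtain ⟨y, -, hy⟩ := H (fun x => decide (x ≠ x₀))
    have hx0f : ¬ (dot3 x₀ y = t) := by
      intro h
      have := (hy x₀ hx0C).mpr h
      simp at this
    have hothers : ∀ x ∈ C, x ≠ x₀ → dot3 x y = t := by
      intro x hx hxne
      exact (hy x hx).mp (by simp [hxne])
    have hsplit : ∑ x ∈ C, c x * (dot3 x y - t) = c x₀ * (dot3 x₀ y - t) := by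
      rw [← Finset.add_sum_erase _ _ hx0C]
      have : ∑ x ∈ C.erase x₀, c x * (dot3 x y - t) = 0 := by
        apply Finset.sum_eq_zero
        intro x hx
        rw [hothers x (mem_of_mem_erase hx) (ne_of_mem_erase hx)]
        ring
      rw [this, add_zero]
    have hzero : ∑ x ∈ C, c x * (dot3 x y - t) = 0 := by
      have : ∑ x ∈ C, c x * (dot3 x y - t)
          = ∑ x ∈ C, c x * dot3 x y - t * ∑ x ∈ C, c x := by
        rw [Finset.mul_sum, ← Finset.sum_sub_distrib]
        congr 1; funext x; ring
      rw [this, hdot, hsumc, mul_zero, sub_zero]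
    rw [hsplit] at hzero
    rcases mul_eq_zero.mp hzero with h | h
    · exact hc0 h
    · exact hx0f (by linear_combination h)
  · -- all-ones labeling
    obtain ⟨y, -, hy⟩ := H (fun _ => true)
    have hall : ∀ x ∈ C, dot3 x y = t := fun x hx => (hy x hx).mp rfl
    have : ∑ x ∈ C, c x * dot3 x y = t * ∑ x ∈ C, c x := by
      rw [Finset.mul_sum]
      apply Finset.sum_congr rfl
      intro x hx; rw [hall x hx]; ring
    rw [hdot y] at this
    have hsum : ∑ x ∈ C, c x = -(g e4) := by linear_combination hlast
    rw [hsum] at this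
    rcases mul_eq_zero.mp this.symm with h | h
    · exact ht h
    · exact hge (neg_eq_zero.mp h)
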